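/- arXiv:0901.3985 — 2 statements merged into one kernel-verified Lean document; each statement's English description precedes it below -/
import Mathlib

section
/- Let n ≥ 5, suppose c_1, c_2, …, c_n are all nonzero, and let z ∈ ℝⁿ. Define x ∈ ℝⁿ by x_n = z_n/c_n, x_{n−1} = (z_{n−1} − e_{n−1}·x_n)/c_{n−1}, x_i = (z_i − e_i·x_{i+1} − ã'_i·x_{i+2})/c_i for i = n−2, n−3, …, 2 (where ã'_2 = ẽ and ã'_i = ã_i for i ≥ 3), and x_1 = (z_1 − e_1·x_2 − ã_1·x_3 − s·x_4)/c_1. Then U·x = z, where U is the n×n upper triangular matrix with U_{i,i} = c_i for i = 1,…,n, U_{i,i+1} = e_i for i = 1,…,n−1, U_{1,3} = ã_1, U_{2,4} = ẽ, U_{i,i+2} = ã_i for i = 3,…,n−2, U_{1,4} = s, and all other entries zero. -/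
open Matrix Finset

/-- The `n × n` nearly pentadiagonal matrix with diagonals `d` (main), `a` (first super),
`ta` (second super), `b` (first sub), `tb` (second sub), together with the extra corner
entries `A 1 4 = s` and `A n (n-3) = t` (1-based indexing). -/
noncomputable def nearlyPenta (n : ℕ) (d a ta b tb : ℕ → ℝ) (s t : ℝ) :
    Matrix (Fin n) (Fin n) ℝ :=
  Matrix.of fun i j =>
    let I := (i : ℕ) + 1
    let J := (j : ℕ) + 1
    if I = J then d I
    else if J = I + 1 then a I
    else if J = I + 2 then ta I
    else if I = J + 1 then b I
    else if I = J + 2 then tb I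
    else if I = 1 ∧ J = 4 then s
    else if I = n ∧ J = n - 3 then t
    else 0

/-- The unit lower triangular factor `L`:  `L i i = 1`, `L (i+1) i = f (i+1)`,
`L (i+2) i = tb (i+2) / c i` for `i = 1,…,n-3`, `L n (n-3) = t / c (n-3)`,
`L n (n-2) = g`, `L n (n-1) = f n` (1-based indexing). -/
noncomputable def matL (n : ℕ) (c f tb : ℕ → ℝ) (t g : ℝ) :
    Matrix (Fin n) (Fin n) ℝ :=
  Matrix.of fun i j =>
    let I := (i : ℕ) + 1
    let J := (j : ℕ) + 1
    if I = J then 1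
    else if I = J + 1 then f I
    else if I = J + 2 ∧ I ≠ n then tb I / c J
    else if I = n ∧ J = n - 2 then g
    else if I = n ∧ J = n - 3 then t / c (n - 3)
    else 0

/-- The upper triangular factor `U`:  `U i i = c i`, `U i (i+1) = e i`,
`U 1 3 = ta 1`, `U 2 4 = et`, `U i (i+2) = ta i` for `i = 3,…,n-2`, and
`U 1 4 = s` (1-based indexing). -/
noncomputable def matU (n : ℕ) (c e ta : ℕ → ℝ) (et s : ℝ) :
    Matrix (Fin n) (Fin n) ℝ :=
  Matrix.of fun i j =>
    let I := (i : ℕ) + 1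
    let J := (j : ℕ) + 1
    if I = J then c I
    else if J = I + 1 then e I
    else if J = I + 2 then (if I = 1 then ta 1 else if I = 2 then et else ta I)
    else if I = 1 ∧ J = 4 then s
    else 0


lemma aux_ind_sum {n m : ℕ} (hm : m < n) (v : ℝ) :
    (∑ j : Fin n, if (j : ℕ) = m then v else 0) = v := by
  rw [Finset.sum_eq_single (⟨m, hm⟩ : Fin n)]
  · simp
  · rintro ⟨b, hb⟩ - hbne
    rw [if_neg]
    simpa [Fin.ext_iff] using hbne
  · intro h; exact absurd (Finset.mem_univ _) h

theorem matU_back_substitution (n : ℕ) (hn : 5 ≤ n)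
    (d a ta b tb : ℕ → ℝ) (s t : ℝ)
    (c e f : ℕ → ℝ) (et g : ℝ)
    (hc1 : c 1 = d 1) (he1 : e 1 = a 1)
    (hf2 : f 2 = b 2 / c 1)
    (hc2 : c 2 = d 2 - f 2 * e 1)
    (he2 : e 2 = a 2 - f 2 * ta 1)
    (het : et = ta 2 - f 2 * s)
    (hf : ∀ i, 3 ≤ i → i ≤ n - 1 →
      f i = (b i - tb i / c (i - 2) * e (i - 2)) / c (i - 1))
    (hc3 : c 3 = d 3 - f 3 * e 2 - tb 3 / c 1 * ta 1)
    (he3 : e 3 = a 3 - f 3 * et - tb 3 / c 1 * s)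
    (hc4 : c 4 = d 4 - f 4 * e 3 - tb 4 / c 2 * et)
    (hc : ∀ i, 5 ≤ i → i ≤ n - 1 →
      c i = d i - f i * e (i - 1) - tb i / c (i - 2) * ta (i - 2))
    (he : ∀ i, 4 ≤ i → i ≤ n - 1 → e i = a i - f i * ta (i - 1))
    (hg : g = (tb n - t / c (n - 3) * e (n - 3)) / c (n - 2))
    (hfn : f n = (b n - t / c (n - 3) * ta (n - 3) - g * e (n - 2)) / c (n - 1))
    (hcn : c n = d n - g * ta (n - 2) - f n * e (n - 1))
    (hcne : ∀ i, 1 ≤ i → i ≤ n → c i ≠ 0)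
    (z x : ℕ → ℝ)
    (hxn : x n = z n / c n)
    (hxn1 : x (n - 1) = (z (n - 1) - e (n - 1) * x n) / c (n - 1))
    (hx : ∀ i, 2 ≤ i → i ≤ n - 2 →
      x i = (z i - e i * x (i + 1) - (if i = 2 then et else ta i) * x (i + 2)) / c i)
    (hx1 : x 1 = (z 1 - e 1 * x 2 - ta 1 * x 3 - s * x 4) / c 1) :
    (matU n c e ta et s).mulVec (fun i : Fin n => x ((i : ℕ) + 1)) =
      fun i : Fin n => z ((i : ℕ) + 1) := by
  funext i
  obtain ⟨k, hk⟩ := i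
  simp only [mulVec, dotProduct]
  by_cases h0 : k = 0
  · subst h0
    have hrow : ∀ j : Fin n, matU n c e ta et s ⟨0, hk⟩ j * x ((j : ℕ) + 1) =
        (if (j : ℕ) = 0 then c (0 + 1) * x (0 + 1) else 0)
        + (if (j : ℕ) = 1 then e (0 + 1) * x (1 + 1) else 0)
        + (if (j : ℕ) = 2 then ta 1 * x (2 + 1) else 0)
        + (if (j : ℕ) = 3 then s * x (3 + 1) else 0) := by
      rintro ⟨m, hm⟩
      simp only [matU, Matrix.of_apply, Fin.val_mk]
      split_ifs <;>
        first
          | (exfalso; omega)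
          | ring1
          | (subst_vars; first | ring1 | (exfalso; omega) | simp_all)
    simp only [hrow]
    rw [Finset.sum_add_distrib, Finset.sum_add_distrib, Finset.sum_add_distrib,
      aux_ind_sum (by omega : 0 < n), aux_ind_sum (by omega : 1 < n),
      aux_ind_sum (by omega : 2 < n), aux_ind_sum (by omega : 3 < n)]
    norm_num
    have hcne1 := hcne 1 le_rfl (by omega)
    field_simp [hcne1] at hx1
    linear_combination hx1
  · by_cases h1 : k = 1
    · subst h1
      have hrow : ∀ j : Fin n, matU n c e ta et s ⟨1, hk⟩ j * x ((j : ℕ) + 1) =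
          (if (j : ℕ) = 1 then c (1 + 1) * x (1 + 1) else 0)
          + (if (j : ℕ) = 2 then e (1 + 1) * x (2 + 1) else 0)
          + (if (j : ℕ) = 3 then et * x (3 + 1) else 0) := by
        rintro ⟨m, hm⟩
        simp only [matU, Matrix.of_apply, Fin.val_mk]
        split_ifs <;>
          first
            | (exfalso; omega)
            | ring1
            | (subst_vars; first | ring1 | (exfalso; omega) | simp_all)
      simp only [hrow]
      rw [Finset.sum_add_distrib, Finset.sum_add_distrib,
        aux_ind_sum (by omega : 1 < n), aux_ind_sum (by omega : 2 < n),
        aux_ind_sum (by omega : 3 < n)]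
      norm_num
      have hx2 := hx 2 le_rfl (by omega)
      rw [if_pos rfl] at hx2
      have hcne2 := hcne 2 (by omega) (by omega)
      field_simp [hcne2] at hx2
      linear_combination hx2
    · by_cases hl1 : k + 1 = n
      · have hrow : ∀ j : Fin n, matU n c e ta et s ⟨k, hk⟩ j * x ((j : ℕ) + 1) =
            (if (j : ℕ) = k then c (k + 1) * x (k + 1) else 0) := by
          rintro ⟨m, hm⟩
          simp only [matU, Matrix.of_apply, Fin.val_mk]
          split_ifs <;>
            first
              | (exfalso; omega)
              | ring1
              | (subst_vars; first | ring1 | (exfalso; omega) | simp_all)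
        simp only [hrow]
        rw [aux_ind_sum (by omega : k < n)]
        rw [show k + 1 = n from hl1, hxn]
        field_simp [hcne n (by omega) le_rfl]
      · by_cases hl2 : k + 2 = n
        · have hrow : ∀ j : Fin n, matU n c e ta et s ⟨k, hk⟩ j * x ((j : ℕ) + 1) =
              (if (j : ℕ) = k then c (k + 1) * x (k + 1) else 0)
              + (if (j : ℕ) = k + 1 then e (k + 1) * x (k + 1 + 1) else 0) := by
            rintro ⟨m, hm⟩
            simp only [matU, Matrix.of_apply, Fin.val_mk]
            split_ifs <;>
              first
                | (exfalso; omega)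
                | ring1
                | (subst_vars; first | ring1 | (exfalso; omega) | simp_all)
          simp only [hrow]
          rw [Finset.sum_add_distrib, aux_ind_sum (by omega : k < n),
            aux_ind_sum (by omega : k + 1 < n)]
          have e1 : n - 1 = k + 1 := by omega
          rw [e1] at hxn1
          rw [show n = k + 1 + 1 from by omega] at hxn1
          have hcnek := hcne (k + 1) (by omega) (by omega)
          field_simp [hcnek] at hxn1
          linear_combination hxn1
        · have hk2 : 2 ≤ k := by omega
          have hk3 : k + 3 ≤ n := by omega
          have hrow : ∀ j : Fin n, matU n c e ta et s ⟨k, hk⟩ j * x ((j : ℕ) + 1) =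
              (if (j : ℕ) = k then c (k + 1) * x (k + 1) else 0)
              + (if (j : ℕ) = k + 1 then e (k + 1) * x (k + 1 + 1) else 0)
              + (if (j : ℕ) = k + 2 then ta (k + 1) * x (k + 2 + 1) else 0) := by
            rintro ⟨m, hm⟩
            simp only [matU, Matrix.of_apply, Fin.val_mk]
            split_ifs <;>
              first
                | (exfalso; omega)
                | ring1
                | (subst_vars; first | ring1 | (exfalso; omega) | simp_all)
          simp only [hrow]
          rw [Finset.sum_add_distrib, Finset.sum_add_distrib,
            aux_ind_sum (by omega : k < n), aux_ind_sum (by omega : k + 1 < n),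
            aux_ind_sum (by omega : k + 2 < n)]
          have hxk := hx (k + 1) (by omega) (by omega)
          rw [if_neg (by omega)] at hxk
          have hcnek := hcne (k + 1) (by omega) (by omega)
          rw [show k + 2 + 1 = k + 1 + 2 from by omega]
          field_simp [hcnek] at hxk
          linear_combination hxk
end

section
/- Let n ≥ 5 and suppose c_1, c_2, …, c_{n−1} are all nonzero. Then for every k with 4 ≤ k ≤ n−1, the determinant of the leading principal k×k submatrix of A equals the product c_1·c_2·⋯·c_k. -/
open Matrix Finset

private lemma gsum (k p : ℕ) (hp : p < k) (G : ℕ → ℝ) :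
    ∑ l ∈ Finset.range k, (if l = p then G l else 0) = G p := by
  rw [Finset.sum_ite_eq' (Finset.range k) p G, if_pos (Finset.mem_range.mpr hp)]

set_option maxHeartbeats 1000000 in
private lemma penta_entry (n k : ℕ) (hn : 5 ≤ n) (hk4 : 4 ≤ k) (hk : k ≤ n - 1)
    (d a ta b tb : ℕ → ℝ) (s t : ℝ) (c e f : ℕ → ℝ) (et g : ℝ)
    (hc1 : c 1 = d 1) (he1 : e 1 = a 1)
    (hf2 : f 2 = b 2 / c 1)
    (hc2 : c 2 = d 2 - f 2 * e 1)
    (he2 : e 2 = a 2 - f 2 * ta 1)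
    (het : et = ta 2 - f 2 * s)
    (hf : ∀ i, 3 ≤ i → i ≤ n - 1 →
      f i = (b i - tb i / c (i - 2) * e (i - 2)) / c (i - 1))
    (hc3 : c 3 = d 3 - f 3 * e 2 - tb 3 / c 1 * ta 1)
    (he3 : e 3 = a 3 - f 3 * et - tb 3 / c 1 * s)
    (hc4 : c 4 = d 4 - f 4 * e 3 - tb 4 / c 2 * et)
    (hc : ∀ i, 5 ≤ i → i ≤ n - 1 →
      c i = d i - f i * e (i - 1) - tb i / c (i - 2) * ta (i - 2))
    (he : ∀ i, 4 ≤ i → i ≤ n - 1 → e i = a i - f i * ta (i - 1))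
    (hcne : ∀ i, 1 ≤ i → i ≤ n - 1 → c i ≠ 0)
    (I J : ℕ) (hIk : I < k) (hJk : J < k) :
    (if I + 1 = J + 1 then d (I + 1)
     else if J + 1 = I + 1 + 1 then a (I + 1)
     else if J + 1 = I + 1 + 2 then ta (I + 1)
     else if I + 1 = J + 1 + 1 then b (I + 1)
     else if I + 1 = J + 1 + 2 then tb (I + 1)
     else if I + 1 = 1 ∧ J + 1 = 4 then s
     else if I + 1 = n ∧ J + 1 = n - 3 then t
     else 0) =
    ∑ l ∈ Finset.range k,
      (if I + 1 = l + 1 then (1:ℝ)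
       else if I + 1 = l + 1 + 1 then f (I + 1)
       else if I + 1 = l + 1 + 2 ∧ I + 1 ≠ n then tb (I + 1) / c (l + 1)
       else if I + 1 = n ∧ l + 1 = n - 2 then g
       else if I + 1 = n ∧ l + 1 = n - 3 then t / c (n - 3)
       else 0) *
      (if l + 1 = J + 1 then c (l + 1)
       else if J + 1 = l + 1 + 1 then e (l + 1)
       else if J + 1 = l + 1 + 2 then (if l + 1 = 1 then ta 1 else if l + 1 = 2 then et else ta (l + 1))
       else if l + 1 = 1 ∧ J + 1 = 4 then s
       else 0) := by
  have hIn : I + 1 ≠ n := by omega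
  have hpt : ∀ l ∈ Finset.range k,
      ((if I + 1 = l + 1 then (1:ℝ)
       else if I + 1 = l + 1 + 1 then f (I + 1)
       else if I + 1 = l + 1 + 2 ∧ I + 1 ≠ n then tb (I + 1) / c (l + 1)
       else if I + 1 = n ∧ l + 1 = n - 2 then g
       else if I + 1 = n ∧ l + 1 = n - 3 then t / c (n - 3)
       else 0) *
      (if l + 1 = J + 1 then c (l + 1)
       else if J + 1 = l + 1 + 1 then e (l + 1)
       else if J + 1 = l + 1 + 2 then (if l + 1 = 1 then ta 1 else if l + 1 = 2 then et else ta (l + 1))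
       else if l + 1 = 1 ∧ J + 1 = 4 then s
       else 0)) =
      (if l = I then
        (if l + 1 = J + 1 then c (l + 1)
         else if J + 1 = l + 1 + 1 then e (l + 1)
         else if J + 1 = l + 1 + 2 then (if l + 1 = 1 then ta 1 else if l + 1 = 2 then et else ta (l + 1))
         else if l + 1 = 1 ∧ J + 1 = 4 then s
         else 0) else 0)
      + (if l = I - 1 then (if 1 ≤ I then f (I + 1) *
        (if l + 1 = J + 1 then c (l + 1)
         else if J + 1 = l + 1 + 1 then e (l + 1)
         else if J + 1 = l + 1 + 2 then (if l + 1 = 1 then ta 1 else if l + 1 = 2 then et else ta (l + 1))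
         else if l + 1 = 1 ∧ J + 1 = 4 then s
         else 0) else 0) else 0)
      + (if l = I - 2 then (if 2 ≤ I then tb (I + 1) / c (l + 1) *
        (if l + 1 = J + 1 then c (l + 1)
         else if J + 1 = l + 1 + 1 then e (l + 1)
         else if J + 1 = l + 1 + 2 then (if l + 1 = 1 then ta 1 else if l + 1 = 2 then et else ta (l + 1))
         else if l + 1 = 1 ∧ J + 1 = 4 then s
         else 0) else 0) else 0) := by
    intro l hl
    set X : ℝ := (if l + 1 = J + 1 then c (l + 1)
       else if J + 1 = l + 1 + 1 then e (l + 1)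
       else if J + 1 = l + 1 + 2 then (if l + 1 = 1 then ta 1 else if l + 1 = 2 then et else ta (l + 1))
       else if l + 1 = 1 ∧ J + 1 = 4 then s
       else 0) with hX
    clear_value X
    split_ifs <;> first | omega | ring
  rw [Finset.sum_congr rfl hpt, Finset.sum_add_distrib, Finset.sum_add_distrib,
    gsum k I hIk, gsum k (I-1) (by omega), gsum k (I-2) (by omega)]
  have hne1 : c 1 ≠ 0 := hcne 1 (by omega) (by omega)
  have hne2 : c 2 ≠ 0 := hcne 2 (by omega) (by omega)
  have hf2' : f 2 * c 1 = b 2 := by rw [hf2, div_mul_cancel₀ _ hne1]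
  have hf3' : f 3 * c 2 = b 3 - tb 3 / c 1 * e 1 := by
    have h := hf 3 (by omega) (by omega)
    norm_num at h
    rw [h, div_mul_cancel₀ _ hne2]
  have hf4' : f 4 * c 3 = b 4 - tb 4 / c 2 * e 2 := by
    have h := hf 4 (by omega) (by omega)
    norm_num at h
    rw [h, div_mul_cancel₀ _ (hcne 3 (by omega) (by omega))]
  have htb3 : tb 3 / c 1 * c 1 = tb 3 := div_mul_cancel₀ _ hne1
  have htb4 : tb 4 / c 2 * c 2 = tb 4 := div_mul_cancel₀ _ hne2
  have he4' : e 4 = a 4 - f 4 * ta 3 := by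
    have h := he 4 (by omega) (by omega)
    norm_num at h
    exact h
  rcases (show I = 0 ∨ I = 1 ∨ I = 2 ∨ I = 3 ∨ 4 ≤ I by omega) with hI0|hI0|hI0|hI0|hI0
  · subst hI0
    norm_num
    split_ifs <;> first | omega |
      ((try norm_num); (try rfl); (try linarith [hc1, he1, hf2', hc2, he2, het, hf3', hc3, he3, htb3, hf4', hc4, he4', htb4]))
  · subst hI0
    norm_num
    split_ifs <;> first | omega |
      ((try norm_num); (try rfl); (try linarith [hc1, he1, hf2', hc2, he2, het, hf3', hc3, he3, htb3, hf4', hc4, he4', htb4]))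
  · subst hI0
    norm_num
    split_ifs <;> first | omega |
      ((try norm_num); (try rfl); (try linarith [hc1, he1, hf2', hc2, he2, het, hf3', hc3, he3, htb3, hf4', hc4, he4', htb4]))
  · subst hI0
    norm_num
    split_ifs <;> first | omega |
      ((try norm_num); (try rfl); (try linarith [hc1, he1, hf2', hc2, he2, het, hf3', hc3, he3, htb3, hf4', hc4, he4', htb4]))
  · have hIn' : I + 1 ≠ n := hIn
    have hcI' : c (I + 1) = d (I + 1) - f (I + 1) * e I - tb (I + 1) / c (I - 1) * ta (I - 1) := by
      have h := hc (I + 1) (by omega) (by omega)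
      rw [show I + 1 - 1 = I from by omega, show I + 1 - 2 = I - 1 from by omega] at h
      exact h
    have heI' : e (I + 1) = a (I + 1) - f (I + 1) * ta I := by
      have h := he (I + 1) (by omega) (by omega)
      rw [show I + 1 - 1 = I from by omega] at h
      exact h
    have hfI' : f (I + 1) * c I = b (I + 1) - tb (I + 1) / c (I - 1) * e (I - 1) := by
      have h := hf (I + 1) (by omega) (by omega)
      rw [show I + 1 - 1 = I from by omega, show I + 1 - 2 = I - 1 from by omega] at h
      rw [h, div_mul_cancel₀ _ (hcne I (by omega) (by omega))]
    have htbI : tb (I + 1) / c (I - 1) * c (I - 1) = tb (I + 1) :=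
      div_mul_cancel₀ _ (hcne (I - 1) (by omega) (by omega))
    rw [show I - 2 + 1 = I - 1 from by omega]
    rw [show I - 1 + 1 = I from by omega]
    rw [show I - 1 + 2 = I + 1 from by omega]
    clear hf hc he hcne hf2 hc2 he2 het hf3' hc3 he3 hc4 hf4' hc1 he1 hf2' htb3 htb4 he4'
    have F1 : I + 1 ≠ 1 := by omega
    have F2 : I + 1 ≠ 2 := by omega
    have F3 : I ≠ 1 := by omega
    have F4 : I ≠ 2 := by omega
    have F5 : I - 1 ≠ 1 := by omega
    have F6 : I - 1 ≠ 2 := by omega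
    have G1 : 1 ≤ I := by omega
    have G2 : 2 ≤ I := by omega
    rcases (show (J = I + 2) ∨ (J = I + 1) ∨ (J = I) ∨ (J + 1 = I) ∨ (J + 2 = I) ∨ (J + 2 < I ∨ I + 2 < J) by omega) with hJ0|hJ0|hJ0|hJ0|hJ0|hJ0
    · simp only [eq_false F1, eq_false F2, eq_false F3, eq_false F4, eq_false F5, eq_false F6, eq_false hIn', eq_true G1, eq_true G2, if_true, if_false, and_false, false_and, and_true, true_and, mul_zero, add_zero, zero_add, eq_false (show ¬(I + 1 = J + 1) from by omega), eq_false (show ¬(J + 1 = I + 1 + 1) from by omega), eq_true (show J + 1 = I + 1 + 2 from by omega), eq_false (show ¬(I + 1 = J + 1 + 1) from by omega), eq_false (show ¬(I + 1 = J + 1 + 2) from by omega), eq_false (show ¬(I = J + 1) from by omega), eq_false (show ¬(J + 1 = I + 1) from by omega), eq_false (show ¬(J + 1 = I + 2) from by omega), eq_false (show ¬(I - 1 = J + 1) from by omega), eq_false (show ¬(J + 1 = I) from by omega)]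
    · simp only [eq_false F1, eq_false F2, eq_false F3, eq_false F4, eq_false F5, eq_false F6, eq_false hIn', eq_true G1, eq_true G2, if_true, if_false, and_false, false_and, and_true, true_and, mul_zero, add_zero, zero_add, eq_false (show ¬(I + 1 = J + 1) from by omega), eq_true (show J + 1 = I + 1 + 1 from by omega), eq_false (show ¬(J + 1 = I + 1 + 2) from by omega), eq_false (show ¬(I + 1 = J + 1 + 1) from by omega), eq_false (show ¬(I + 1 = J + 1 + 2) from by omega), eq_false (show ¬(I = J + 1) from by omega), eq_false (show ¬(J + 1 = I + 1) from by omega), eq_true (show J + 1 = I + 2 from by omega), eq_false (show ¬(I - 1 = J + 1) from by omega), eq_false (show ¬(J + 1 = I) from by omega)]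
      linarith [heI']
    · simp only [eq_false F1, eq_false F2, eq_false F3, eq_false F4, eq_false F5, eq_false F6, eq_false hIn', eq_true G1, eq_true G2, if_true, if_false, and_false, false_and, and_true, true_and, mul_zero, add_zero, zero_add, eq_true (show I + 1 = J + 1 from by omega), eq_false (show ¬(J + 1 = I + 1 + 1) from by omega), eq_false (show ¬(J + 1 = I + 1 + 2) from by omega), eq_false (show ¬(I + 1 = J + 1 + 1) from by omega), eq_false (show ¬(I + 1 = J + 1 + 2) from by omega), eq_false (show ¬(I = J + 1) from by omega), eq_true (show J + 1 = I + 1 from by omega), eq_false (show ¬(J + 1 = I + 2) from by omega), eq_false (show ¬(I - 1 = J + 1) from by omega), eq_false (show ¬(J + 1 = I) from by omega)]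
      linarith [hcI']
    · simp only [eq_false F1, eq_false F2, eq_false F3, eq_false F4, eq_false F5, eq_false F6, eq_false hIn', eq_true G1, eq_true G2, if_true, if_false, and_false, false_and, and_true, true_and, mul_zero, add_zero, zero_add, eq_false (show ¬(I + 1 = J + 1) from by omega), eq_false (show ¬(J + 1 = I + 1 + 1) from by omega), eq_false (show ¬(J + 1 = I + 1 + 2) from by omega), eq_true (show I + 1 = J + 1 + 1 from by omega), eq_false (show ¬(I + 1 = J + 1 + 2) from by omega), eq_true (show I = J + 1 from by omega), eq_false (show ¬(J + 1 = I + 1) from by omega), eq_false (show ¬(J + 1 = I + 2) from by omega), eq_false (show ¬(I - 1 = J + 1) from by omega), eq_true (show J + 1 = I from by omega)]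
      linarith [hfI']
    · simp only [eq_false F1, eq_false F2, eq_false F3, eq_false F4, eq_false F5, eq_false F6, eq_false hIn', eq_true G1, eq_true G2, if_true, if_false, and_false, false_and, and_true, true_and, mul_zero, add_zero, zero_add, eq_false (show ¬(I + 1 = J + 1) from by omega), eq_false (show ¬(J + 1 = I + 1 + 1) from by omega), eq_false (show ¬(J + 1 = I + 1 + 2) from by omega), eq_false (show ¬(I + 1 = J + 1 + 1) from by omega), eq_true (show I + 1 = J + 1 + 2 from by omega), eq_false (show ¬(I = J + 1) from by omega), eq_false (show ¬(J + 1 = I + 1) from by omega), eq_false (show ¬(J + 1 = I + 2) from by omega), eq_true (show I - 1 = J + 1 from by omega), eq_false (show ¬(J + 1 = I) from by omega)]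
      linarith [htbI]
    · simp only [eq_false F1, eq_false F2, eq_false F3, eq_false F4, eq_false F5, eq_false F6, eq_false hIn', eq_true G1, eq_true G2, if_true, if_false, and_false, false_and, and_true, true_and, mul_zero, add_zero, zero_add, eq_false (show ¬(I + 1 = J + 1) from by omega), eq_false (show ¬(J + 1 = I + 1 + 1) from by omega), eq_false (show ¬(J + 1 = I + 1 + 2) from by omega), eq_false (show ¬(I + 1 = J + 1 + 1) from by omega), eq_false (show ¬(I + 1 = J + 1 + 2) from by omega), eq_false (show ¬(I = J + 1) from by omega), eq_false (show ¬(J + 1 = I + 1) from by omega), eq_false (show ¬(J + 1 = I + 2) from by omega), eq_false (show ¬(I - 1 = J + 1) from by omega), eq_false (show ¬(J + 1 = I) from by omega)]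

theorem nearlyPenta_leading_principal_minor (n : ℕ) (hn : 5 ≤ n)
    (d a ta b tb : ℕ → ℝ) (s t : ℝ)
    (c e f : ℕ → ℝ) (et g : ℝ)
    (hc1 : c 1 = d 1) (he1 : e 1 = a 1)
    (hf2 : f 2 = b 2 / c 1)
    (hc2 : c 2 = d 2 - f 2 * e 1)
    (he2 : e 2 = a 2 - f 2 * ta 1)
    (het : et = ta 2 - f 2 * s)
    (hf : ∀ i, 3 ≤ i → i ≤ n - 1 →
      f i = (b i - tb i / c (i - 2) * e (i - 2)) / c (i - 1))
    (hc3 : c 3 = d 3 - f 3 * e 2 - tb 3 / c 1 * ta 1)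
    (he3 : e 3 = a 3 - f 3 * et - tb 3 / c 1 * s)
    (hc4 : c 4 = d 4 - f 4 * e 3 - tb 4 / c 2 * et)
    (hc : ∀ i, 5 ≤ i → i ≤ n - 1 →
      c i = d i - f i * e (i - 1) - tb i / c (i - 2) * ta (i - 2))
    (he : ∀ i, 4 ≤ i → i ≤ n - 1 → e i = a i - f i * ta (i - 1))
    (hg : g = (tb n - t / c (n - 3) * e (n - 3)) / c (n - 2))
    (hfn : f n = (b n - t / c (n - 3) * ta (n - 3) - g * e (n - 2)) / c (n - 1))
    (hcn : c n = d n - g * ta (n - 2) - f n * e (n - 1))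
    (hcne : ∀ i, 1 ≤ i → i ≤ n - 1 → c i ≠ 0) :
    ∀ k, 4 ≤ k → ∀ hk : k ≤ n - 1,
      ((nearlyPenta n d a ta b tb s t).submatrix
          (Fin.castLE (show k ≤ n by omega)) (Fin.castLE (show k ≤ n by omega))).det =
        ∏ i ∈ Finset.Icc 1 k, c i := by
  intro k hk4 hk
  have hkn : k ≤ n := by omega
  have hLU : (nearlyPenta n d a ta b tb s t).submatrix
      (Fin.castLE (show k ≤ n by omega)) (Fin.castLE (show k ≤ n by omega)) =
      ((matL n c f tb t g).submatrix (Fin.castLE hkn) (Fin.castLE hkn)) *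
      ((matU n c e ta et s).submatrix (Fin.castLE hkn) (Fin.castLE hkn)) := by
    ext i j
    rw [Matrix.mul_apply]
    simp only [Matrix.submatrix_apply, Fin.coe_castLE, nearlyPenta, matL, matU, Matrix.of_apply]
    rw [Fin.sum_univ_eq_sum_range (fun l =>
      (if (i : ℕ) + 1 = l + 1 then (1:ℝ)
       else if (i : ℕ) + 1 = l + 1 + 1 then f ((i : ℕ) + 1)
       else if (i : ℕ) + 1 = l + 1 + 2 ∧ (i : ℕ) + 1 ≠ n then tb ((i : ℕ) + 1) / c (l + 1)
       else if (i : ℕ) + 1 = n ∧ l + 1 = n - 2 then g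
       else if (i : ℕ) + 1 = n ∧ l + 1 = n - 3 then t / c (n - 3)
       else 0) *
      (if l + 1 = (j : ℕ) + 1 then c (l + 1)
       else if (j : ℕ) + 1 = l + 1 + 1 then e (l + 1)
       else if (j : ℕ) + 1 = l + 1 + 2 then (if l + 1 = 1 then ta 1 else if l + 1 = 2 then et else ta (l + 1))
       else if l + 1 = 1 ∧ (j : ℕ) + 1 = 4 then s
       else 0)) k]
    exact penta_entry n k hn hk4 hk d a ta b tb s t c e f et g hc1 he1 hf2 hc2 he2 het hf
      hc3 he3 hc4 hc he hcne (i : ℕ) (j : ℕ) i.isLt j.isLt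
  rw [hLU, Matrix.det_mul]
  have hdetL : ((matL n c f tb t g).submatrix (Fin.castLE hkn) (Fin.castLE hkn)).det = 1 := by
    rw [Matrix.det_of_lowerTriangular]
    · apply Finset.prod_eq_one
      intro i _
      simp [matL, Matrix.submatrix_apply]
    · intro i j hij
      have hij' : (i : ℕ) < (j : ℕ) := hij
      have hin : (i : ℕ) + 1 ≠ n := by
        have : (i : ℕ) < k := i.isLt
        omega
      simp only [Matrix.submatrix_apply, matL, Matrix.of_apply, Fin.coe_castLE]
      split_ifs with h1 h2 h3 h4 h5 <;> first | rfl | omega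
  have hdetU : ((matU n c e ta et s).submatrix (Fin.castLE hkn) (Fin.castLE hkn)).det =
      ∏ i ∈ Finset.range k, c (i + 1) := by
    rw [Matrix.det_of_upperTriangular]
    · rw [← Fin.prod_univ_eq_prod_range]
      apply Finset.prod_congr rfl
      intro i _
      simp [matU, Matrix.submatrix_apply]
    · intro i j hij
      have hij' : (j : ℕ) < (i : ℕ) := hij
      simp only [Matrix.submatrix_apply, matU, Matrix.of_apply, Fin.coe_castLE]
      split_ifs with h1 h2 h3 h4 <;> first | rfl | omega
  rw [hdetL, hdetU, one_mul]
  rw [← Finset.Ico_add_one_right_eq_Icc, Finset.prod_Ico_eq_prod_range]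
  simp [add_comm]
end
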